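/- Let n ≥ 2 and let μ be a finite Borel measure on ℝ^n. For x ∈ ℝ^n and r > 0 define the β-number β_μ(x,r) := inf_P r^{−n} ∫_{B(x,r)} dist(z, P) dμ(z), where the infimum is over all affine hyperplanes P ⊆ ℝ^n (affine subspaces of dimension n−1) and B(x,r) is the open Euclidean ball. Let S ⊆ ℝ^n be Borel with μ(ℝ^n ∖ S) = 0, let c > 0 and r₀ ∈ (0,1) be such that μ(B(x,ρ)) ≥ c ρ^{n−1} for every x ∈ S and every 0 < ρ < r₀, and assume the global square-function bound ∫_S ∫_0^1 β_μ(x,s)² s^{−1} ds dμ(x) ≤ A₁ < ∞. Fix η ∈ (0,1). Then there exist a constant C depending only on n and c, and a sequence r_j ∈ (0, r₀) with r_j → 0, such that for every j and every finite family of points {x_h} ⊆ S with pairwise distances at least r_j/5, the number of indices h with β_μ(x_h, r_j) > η is at most C η^{−2} A₁ r_j^{1−n} / |log r_j|. -/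

import Mathlib

open MeasureTheory Metric Filter
open scoped ENNReal Classical Topology

/-- The Jones-type β-number of a measure `μ` at center `x` and scale `r`:
`β_μ(x,r) = inf_P r^{-n} ∫_{B(x,r)} dist(z,P) dμ(z)`, the infimum running over all
affine hyperplanes `P` (nonempty affine subspaces whose direction has dimension `n-1`). -/
noncomputable def betaNum (n : ℕ) (μ : Measure (EuclideanSpace ℝ (Fin n)))
    (x : EuclideanSpace ℝ (Fin n)) (r : ℝ) : ℝ≥0∞ :=
  ⨅ (P : AffineSubspace ℝ (EuclideanSpace ℝ (Fin n)))
    (_ : (P : Set (EuclideanSpace ℝ (Fin n))).Nonempty)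
    (_ : Module.finrank ℝ P.direction = n - 1),
    ENNReal.ofReal (r ^ (-(n : ℝ))) *
      ∫⁻ z in ball x r,
        ENNReal.ofReal (infDist z (P : Set (EuclideanSpace ℝ (Fin n)))) ∂μ

/-- Superadditivity of the lower Lebesgue integral over finite sums
(no measurability needed). -/
lemma sum_lintegral_le {α β : Type*} [MeasurableSpace α] (μ : Measure α)
    (s : Finset β) (f : β → α → ℝ≥0∞) :
    ∑ i ∈ s, ∫⁻ a, f i a ∂μ ≤ ∫⁻ a, ∑ i ∈ s, f i a ∂μ := by
  classical
  induction s using Finset.cons_induction with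
  | empty => simp
  | cons i s hi ih =>
    rw [Finset.sum_cons]
    calc (∫⁻ a, f i a ∂μ) + ∑ j ∈ s, ∫⁻ a, f j a ∂μ
        ≤ (∫⁻ a, f i a ∂μ) + ∫⁻ a, ∑ j ∈ s, f j a ∂μ := by gcongr
      _ ≤ ∫⁻ a, f i a + ∑ j ∈ s, f j a ∂μ := le_lintegral_add _ _
      _ = ∫⁻ a, ∑ j ∈ Finset.cons i s hi, f j a ∂μ := by simp [Finset.sum_cons, Finset.sum_insert hi]

/-- Comparison of β-numbers at nearby centers and comparable scales. -/
lemma betaNum_scale_mono (n : ℕ) (μ : Measure (EuclideanSpace ℝ (Fin n)))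
    (x z : EuclideanSpace ℝ (Fin n)) (r s : ℝ) (hr : 0 < r) (hs : 0 < s)
    (hsub : ball x r ⊆ ball z s) (hs2 : s ≤ 2 * r) :
    ENNReal.ofReal ((2 : ℝ)⁻¹ ^ n) * betaNum n μ x r ≤ betaNum n μ z s := by
  refine le_iInf fun P => le_iInf fun hP => le_iInf fun hd => ?_
  have h1 : betaNum n μ x r ≤ ENNReal.ofReal (r ^ (-(n : ℝ))) *
      ∫⁻ w in ball x r,
        ENNReal.ofReal (infDist w (P : Set (EuclideanSpace ℝ (Fin n)))) ∂μ :=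
    iInf_le_of_le P (iInf_le_of_le hP (iInf_le_of_le hd le_rfl))
  calc ENNReal.ofReal ((2 : ℝ)⁻¹ ^ n) * betaNum n μ x r
      ≤ ENNReal.ofReal ((2 : ℝ)⁻¹ ^ n) * (ENNReal.ofReal (r ^ (-(n : ℝ))) *
          ∫⁻ w in ball x r,
            ENNReal.ofReal (infDist w (P : Set (EuclideanSpace ℝ (Fin n)))) ∂μ) := by
        exact mul_le_mul_right h1 _
    _ = ENNReal.ofReal ((2 : ℝ)⁻¹ ^ n * r ^ (-(n : ℝ))) *
          ∫⁻ w in ball x r,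
            ENNReal.ofReal (infDist w (P : Set (EuclideanSpace ℝ (Fin n)))) ∂μ := by
        rw [← mul_assoc, ← ENNReal.ofReal_mul (by positivity)]
    _ ≤ ENNReal.ofReal (s ^ (-(n : ℝ))) *
          ∫⁻ w in ball z s,
            ENNReal.ofReal (infDist w (P : Set (EuclideanSpace ℝ (Fin n)))) ∂μ := by
        refine mul_le_mul' (ENNReal.ofReal_le_ofReal ?_) (lintegral_mono_set hsub)
        have key : (2 : ℝ)⁻¹ ^ n * r ^ (-(n : ℝ)) = (2 * r) ^ (-(n : ℝ)) := by
          rw [Real.mul_rpow (by norm_num) hr.le]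
          congr 1
          rw [Real.rpow_neg (by norm_num : (0:ℝ) ≤ 2), Real.rpow_natCast]
          exact inv_pow 2 n
        rw [key]
        exact Real.rpow_le_rpow_of_nonpos hs hs2 (by simp)

set_option maxHeartbeats 1000000 in
theorem betaNum_bad_count_log_gain
    (n : ℕ) (hn : 2 ≤ n) (c : ℝ) (hc : 0 < c) :
    ∃ C : ℝ, 0 < C ∧
      ∀ (μ : Measure (EuclideanSpace ℝ (Fin n))), IsFiniteMeasure μ →
      ∀ S : Set (EuclideanSpace ℝ (Fin n)), MeasurableSet S → μ Sᶜ = 0 →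
      ∀ r₀ : ℝ, 0 < r₀ → r₀ < 1 →
      (∀ x ∈ S, ∀ ρ : ℝ, 0 < ρ → ρ < r₀ →
        ENNReal.ofReal (c * ρ ^ (n - 1)) ≤ μ (ball x ρ)) →
      ∀ A₁ : ℝ,
      (∫⁻ x in S,
          (∫⁻ s in Set.Ioc (0 : ℝ) 1,
            (betaNum n μ x s) ^ 2 * ENNReal.ofReal s⁻¹) ∂μ) ≤ ENNReal.ofReal A₁ →
      ∀ η : ℝ, 0 < η → η < 1 →
      ∃ r : ℕ → ℝ, (∀ j, 0 < r j ∧ r j < r₀) ∧ Tendsto r atTop (𝓝 0) ∧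
        ∀ j : ℕ, ∀ I : Finset (EuclideanSpace ℝ (Fin n)),
          (↑I : Set (EuclideanSpace ℝ (Fin n))) ⊆ S →
          (∀ x ∈ I, ∀ y ∈ I, x ≠ y → r j / 5 ≤ dist x y) →
          ((I.filter fun x => ENNReal.ofReal η < betaNum n μ x (r j)).card : ℝ≥0∞) ≤
            ENNReal.ofReal
              (C * η ^ (-2 : ℝ) * A₁ * (r j) ^ ((1 : ℝ) - n) / |Real.log (r j)|) := by
  have hlog2 : 0 < Real.log 2 := Real.log_pos one_lt_two
  refine ⟨2 * Real.log 2 * 4 ^ (n + 1) * 10 ^ (n - 1) / c, by positivity, ?_⟩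
  intro μ _ S hSm hSc r₀ hr₀ hr₀1 hAD A₁ hA₁ η hη hη1
  obtain ⟨K₀, hK₀⟩ := exists_pow_lt_of_lt_one hr₀ (by norm_num : (2:ℝ)⁻¹ < 1)
  set K : ℕ → ℕ := fun j => max (j + 1) K₀ with hKdef
  set A : ℕ → Set ℝ := fun k => Set.Ioc (3 / 2 * (2:ℝ)⁻¹ ^ k) (2 * (2:ℝ)⁻¹ ^ k) with hAdef
  set F : ℕ → ℝ≥0∞ := fun k =>
    ∫⁻ z in S, (∫⁻ s in A k, (betaNum n μ z s) ^ 2 * ENNReal.ofReal s⁻¹) ∂μ with hFdef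
  -- annuli are pairwise disjoint and, for k ≥ 1, inside (0,1]
  have hAdisj : ∀ k k' : ℕ, k < k' → Disjoint (A k) (A k') := by
    intro k k' hkk'
    refine Set.disjoint_left.2 fun t ht ht' => ?_
    have h1 : 3 / 2 * (2:ℝ)⁻¹ ^ k < t := ht.1
    have h2 : t ≤ 2 * (2:ℝ)⁻¹ ^ k' := ht'.2
    have h3 : (2:ℝ)⁻¹ ^ k' ≤ (2:ℝ)⁻¹ ^ (k + 1) :=
      pow_le_pow_of_le_one (by norm_num) (by norm_num) hkk'
    have h4 : (2:ℝ)⁻¹ ^ (k + 1) = (2:ℝ)⁻¹ ^ k * 2⁻¹ := pow_succ _ _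
    nlinarith [pow_pos (by norm_num : (0:ℝ) < 2⁻¹) k]
  have hAsub : ∀ k : ℕ, 1 ≤ k → A k ⊆ Set.Ioc (0:ℝ) 1 := by
    intro k hk t ht
    have h3 : (2:ℝ)⁻¹ ^ k ≤ (2:ℝ)⁻¹ ^ 1 := pow_le_pow_of_le_one (by norm_num) (by norm_num) hk
    have hp : (0:ℝ) < (2:ℝ)⁻¹ ^ k := pow_pos (by norm_num) k
    constructor
    · nlinarith [ht.1]
    · nlinarith [ht.2]
  -- sum of annulus contributions is controlled by A₁
  have hsum : ∀ T : Finset ℕ, (∀ k ∈ T, 1 ≤ k) → ∑ k ∈ T, F k ≤ ENNReal.ofReal A₁ := by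
    intro T hT
    refine le_trans ?_ hA₁
    calc ∑ k ∈ T, F k
        ≤ ∫⁻ z in S, ∑ k ∈ T,
            (∫⁻ s in A k, (betaNum n μ z s) ^ 2 * ENNReal.ofReal s⁻¹) ∂μ :=
          sum_lintegral_le _ T _
      _ ≤ ∫⁻ z in S,
            (∫⁻ s in Set.Ioc (0:ℝ) 1, (betaNum n μ z s) ^ 2 * ENNReal.ofReal s⁻¹) ∂μ := by
          refine lintegral_mono fun z => ?_
          rw [← lintegral_biUnion_finset (f := fun s => (betaNum n μ z s) ^ 2 *
              ENNReal.ofReal s⁻¹) (μ := volume)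
            (fun k _ k' _ hne => hne.lt_or_gt.elim (hAdisj k k') fun h => (hAdisj k' k h).symm)
            (fun k _ => measurableSet_Ioc)]
          exact lintegral_mono_set (Set.iUnion₂_subset fun k hk => hAsub k (hT k hk))
  -- pigeonhole: choice of good scales
  have hKpos : ∀ j, 0 < K j := fun j => lt_of_lt_of_le (Nat.succ_pos j) (le_max_left _ _)
  have hex : ∀ j, ∃ k, k ∈ Finset.Ioc (K j) (2 * K j) ∧
      F k ≤ ENNReal.ofReal A₁ / (K j : ℝ≥0∞) := by
    intro j
    have hne : (Finset.Ioc (K j) (2 * K j)).Nonempty :=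
      ⟨K j + 1, Finset.mem_Ioc.2 ⟨Nat.lt_succ_self _, by have := hKpos j; omega⟩⟩
    obtain ⟨k, hk, hkmin⟩ := Finset.exists_min_image _ F hne
    refine ⟨k, hk, ?_⟩
    rw [ENNReal.le_div_iff_mul_le (Or.inl (by exact_mod_cast (hKpos j).ne'))
      (Or.inl (ENNReal.natCast_ne_top _))]
    have hcard : (Finset.Ioc (K j) (2 * K j)).card = K j := by
      rw [Nat.card_Ioc]; omega
    calc F k * (K j : ℝ≥0∞) = (K j) • F k := by
          rw [nsmul_eq_mul, mul_comm]
      _ = (Finset.Ioc (K j) (2 * K j)).card • F k := by rw [hcard]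
      _ ≤ ∑ k' ∈ Finset.Ioc (K j) (2 * K j), F k' :=
          Finset.card_nsmul_le_sum _ _ _ hkmin
      _ ≤ ENNReal.ofReal A₁ := hsum _ fun k' hk' => by
          have h1 := (Finset.mem_Ioc.1 hk').1
          have h2 := hKpos j
          omega
  choose k hkmem hkF using hex
  have hkj : ∀ j, K j < k j ∧ k j ≤ 2 * K j := fun j => Finset.mem_Ioc.1 (hkmem j)
  set r : ℕ → ℝ := fun j => (2:ℝ)⁻¹ ^ (k j) with hrdef
  have hrpos : ∀ j, 0 < r j := fun j => pow_pos (by norm_num) _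
  have hrlt : ∀ j, r j < r₀ := by
    intro j
    have h1 : K₀ ≤ k j := le_trans (le_max_right _ _) (hkj j).1.le
    calc r j ≤ (2:ℝ)⁻¹ ^ K₀ := pow_le_pow_of_le_one (by norm_num) (by norm_num) h1
      _ < r₀ := hK₀
  refine ⟨r, fun j => ⟨hrpos j, hrlt j⟩, ?_, ?_⟩
  · refine squeeze_zero (fun j => (hrpos j).le)
      (fun j => pow_le_pow_of_le_one (by norm_num) (by norm_num) ?_)
      (tendsto_pow_atTop_nhds_zero_of_lt_one (by norm_num) (by norm_num))
    have h1 := (hkj j).1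
    have h2 : j + 1 ≤ K j := le_max_left _ _
    omega
  intro j I hIS hsep
  have hrj := hrpos j
  set Bd := I.filter fun x => ENNReal.ofReal η < betaNum n μ x (r j) with hBd
  set g : EuclideanSpace ℝ (Fin n) → ℝ≥0∞ := fun z =>
    ∫⁻ s in A (k j), (betaNum n μ z s) ^ 2 * ENNReal.ofReal s⁻¹ with hg
  have hsq : ((2:ℝ)⁻¹ ^ n * η) ^ 2 = η ^ 2 / 4 ^ n := by
    have hP : ((2:ℝ)⁻¹ ^ n) ^ 2 * 4 ^ n = 1 := by
      rw [← pow_mul, mul_comm n 2, pow_mul, ← mul_pow]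
      norm_num
    rw [mul_pow, eq_div_iff (ne_of_gt (by positivity : (0:ℝ) < 4 ^ n))]
    linear_combination η ^ 2 * hP
  set q : ℝ := η ^ 2 / 4 ^ n / 4 * (c * (r j / 10) ^ (n - 1)) with hq
  have hqpos : 0 < q := by positivity
  have hAkj : A (k j) = Set.Ioc (3 / 2 * r j) (2 * r j) := rfl
  -- per-ball lower bound
  have hball : ∀ x ∈ Bd, ENNReal.ofReal q ≤ ∫⁻ z in S ∩ ball x (r j / 10), g z ∂μ := by
    intro x hx
    rw [hBd, Finset.mem_filter] at hx
    obtain ⟨hxI, hxβ⟩ := hx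
    have hxS : x ∈ S := hIS hxI
    have hinner : ∀ z ∈ S ∩ ball x (r j / 10),
        ENNReal.ofReal (((2:ℝ)⁻¹ ^ n * η) ^ 2 / 4) ≤ g z := by
      intro z hz
      have hzball : dist z x < r j / 10 := mem_ball.1 hz.2
      have hstep : ∀ s ∈ A (k j),
          ENNReal.ofReal (((2:ℝ)⁻¹ ^ n * η) ^ 2 * (2 * r j)⁻¹)
            ≤ (betaNum n μ z s) ^ 2 * ENNReal.ofReal s⁻¹ := by
        intro s hs
        rw [hAkj] at hs
        obtain ⟨hs1, hs2⟩ := hs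
        have hspos : 0 < s := lt_trans (by positivity) hs1
        have hsub : ball x (r j) ⊆ ball z s := by
          intro w hw
          rw [mem_ball] at hw ⊢
          calc dist w z ≤ dist w x + dist x z := dist_triangle _ _ _
            _ < r j + r j / 10 := by
                rw [dist_comm x z]; exact add_lt_add hw hzball
            _ ≤ s := by nlinarith
        have hb1 : ENNReal.ofReal ((2:ℝ)⁻¹ ^ n * η) ≤ betaNum n μ z s := by
          calc ENNReal.ofReal ((2:ℝ)⁻¹ ^ n * η)
              = ENNReal.ofReal ((2:ℝ)⁻¹ ^ n) * ENNReal.ofReal η :=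
                ENNReal.ofReal_mul (by positivity)
            _ ≤ ENNReal.ofReal ((2:ℝ)⁻¹ ^ n) * betaNum n μ x (r j) :=
                mul_le_mul_right hxβ.le _
            _ ≤ betaNum n μ z s := betaNum_scale_mono n μ x z (r j) s hrj hspos hsub hs2
        calc ENNReal.ofReal (((2:ℝ)⁻¹ ^ n * η) ^ 2 * (2 * r j)⁻¹)
            = ENNReal.ofReal ((2:ℝ)⁻¹ ^ n * η) ^ 2 * ENNReal.ofReal ((2 * r j)⁻¹) := by
              rw [ENNReal.ofReal_mul (by positivity), ENNReal.ofReal_pow (by positivity)]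
          _ ≤ (betaNum n μ z s) ^ 2 * ENNReal.ofReal s⁻¹ := by
              refine mul_le_mul' (pow_le_pow_left' hb1 2) (ENNReal.ofReal_le_ofReal ?_)
              exact inv_anti₀ hspos hs2
      have hvol : volume (A (k j)) = ENNReal.ofReal (r j / 2) := by
        rw [hAkj, Real.volume_Ioc]
        congr 1
        ring
      calc ENNReal.ofReal (((2:ℝ)⁻¹ ^ n * η) ^ 2 / 4)
          = ENNReal.ofReal (((2:ℝ)⁻¹ ^ n * η) ^ 2 * (2 * r j)⁻¹) *
              ENNReal.ofReal (r j / 2) := by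
            rw [← ENNReal.ofReal_mul (by positivity)]
            congr 1
            field_simp
            ring
        _ = ∫⁻ _ in A (k j), ENNReal.ofReal (((2:ℝ)⁻¹ ^ n * η) ^ 2 * (2 * r j)⁻¹) := by
            rw [setLIntegral_const, hvol]
        _ ≤ g z := setLIntegral_mono' measurableSet_Ioc hstep
    have hμ : ENNReal.ofReal (c * (r j / 10) ^ (n - 1)) ≤ μ (S ∩ ball x (r j / 10)) := by
      rw [Set.inter_comm, measure_inter_conull hSc]
      exact hAD x hxS _ (by positivity) (by nlinarith [hrlt j])
    calc ENNReal.ofReal q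
        = ENNReal.ofReal (((2:ℝ)⁻¹ ^ n * η) ^ 2 / 4) *
            ENNReal.ofReal (c * (r j / 10) ^ (n - 1)) := by
          rw [← ENNReal.ofReal_mul (by positivity), hq, hsq]
      _ ≤ ENNReal.ofReal (((2:ℝ)⁻¹ ^ n * η) ^ 2 / 4) * μ (S ∩ ball x (r j / 10)) :=
          mul_le_mul_right hμ _
      _ = ∫⁻ _ in S ∩ ball x (r j / 10),
            ENNReal.ofReal (((2:ℝ)⁻¹ ^ n * η) ^ 2 / 4) ∂μ := (setLIntegral_const _ _).symm
      _ ≤ ∫⁻ z in S ∩ ball x (r j / 10), g z ∂μ :=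
          setLIntegral_mono' (hSm.inter measurableSet_ball) hinner
  -- the balls are pairwise disjoint
  have hdis : Set.PairwiseDisjoint ↑Bd (fun x => S ∩ ball x (r j / 10)) := by
    intro x hx y hy hxy
    refine Set.disjoint_left.2 fun z hzx hzy => ?_
    have hxI : x ∈ I := Finset.mem_of_mem_filter x hx
    have hyI : y ∈ I := Finset.mem_of_mem_filter y hy
    have hd := hsep x hxI y hyI hxy
    have h1 : dist z x < r j / 10 := mem_ball.1 hzx.2
    have h2 : dist z y < r j / 10 := mem_ball.1 hzy.2
    have : dist x y < r j / 5 := by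
      calc dist x y ≤ dist x z + dist z y := dist_triangle _ _ _
        _ < r j / 10 + r j / 10 := by rw [dist_comm x z]; exact add_lt_add h1 h2
        _ = r j / 5 := by ring
    linarith
  -- counting
  have hcount : (Bd.card : ℝ≥0∞) * ENNReal.ofReal q ≤ ENNReal.ofReal A₁ / (K j : ℝ≥0∞) := by
    calc (Bd.card : ℝ≥0∞) * ENNReal.ofReal q
        = Bd.card • ENNReal.ofReal q := (nsmul_eq_mul _ _).symm
      _ ≤ ∑ x ∈ Bd, ∫⁻ z in S ∩ ball x (r j / 10), g z ∂μ :=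
          Finset.card_nsmul_le_sum _ _ _ hball
      _ = ∫⁻ z in ⋃ x ∈ Bd, S ∩ ball x (r j / 10), g z ∂μ :=
          (lintegral_biUnion_finset hdis (fun x _ => hSm.inter measurableSet_ball) _).symm
      _ ≤ ∫⁻ z in S, g z ∂μ :=
          lintegral_mono_set (Set.iUnion₂_subset fun x _ => Set.inter_subset_left)
      _ = F (k j) := rfl
      _ ≤ ENNReal.ofReal A₁ / (K j : ℝ≥0∞) := hkF j
  -- final arithmetic
  rcases le_or_gt A₁ 0 with hA | hA
  · rw [ENNReal.ofReal_eq_zero.2 hA, ENNReal.zero_div] at hcount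
    have h0 : (Bd.card : ℝ≥0∞) = 0 := by
      rcases mul_eq_zero.1 (le_antisymm hcount zero_le) with h | h
      · exact h
      · exact absurd h (by simp [ENNReal.ofReal_eq_zero, not_le, hqpos])
    exact h0 ▸ zero_le
  · have hKR : (0:ℝ) < (K j : ℝ) := by exact_mod_cast hKpos j
    have h1 : (Bd.card : ℝ≥0∞) ≤ ENNReal.ofReal A₁ / (K j : ℝ≥0∞) / ENNReal.ofReal q :=
      (ENNReal.le_div_iff_mul_le
        (Or.inl (by simp [ENNReal.ofReal_eq_zero, not_le, hqpos]))
        (Or.inl ENNReal.ofReal_ne_top)).2 hcount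
    refine h1.trans ?_
    have heq : ENNReal.ofReal (A₁ / (K j : ℝ) / q) =
        ENNReal.ofReal A₁ / (K j : ℝ≥0∞) / ENNReal.ofReal q := by
      rw [ENNReal.ofReal_div_of_pos hqpos, ENNReal.ofReal_div_of_pos hKR,
        ENNReal.ofReal_natCast]
    rw [← heq]
    refine ENNReal.ofReal_le_ofReal ?_
    -- the real inequality
    have hη2 : η ^ (-2:ℝ) = (η ^ 2)⁻¹ := by
      rw [show ((-2:ℝ)) = -((2:ℕ):ℝ) by norm_num, Real.rpow_neg hη.le, Real.rpow_natCast]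
    have hr1n : (r j) ^ ((1:ℝ) - n) = ((r j) ^ (n - 1 : ℕ))⁻¹ := by
      rw [show (1:ℝ) - n = -((n - 1 : ℕ):ℝ) by
          rw [Nat.cast_sub (by omega)]; push_cast; ring,
        Real.rpow_neg hrj.le, Real.rpow_natCast]
    have hlogr : |Real.log (r j)| = (k j : ℝ) * Real.log 2 := by
      have hl : Real.log (r j) = (k j : ℝ) * -Real.log 2 := by
        show Real.log ((2:ℝ)⁻¹ ^ k j) = _
        rw [Real.log_pow, Real.log_inv]
      have hnn : (k j : ℝ) * -Real.log 2 ≤ 0 := by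
        have h0 : (0:ℝ) ≤ (k j : ℝ) := Nat.cast_nonneg _
        nlinarith
      rw [hl, abs_of_nonpos hnn]
      ring
    rw [hη2, hr1n, hlogr]
    have hkpos : (0:ℝ) < (k j : ℝ) := by
      have := (hkj j).1
      have := hKpos j
      exact_mod_cast (by omega : 0 < k j)
    have hkK : (k j : ℝ) ≤ 2 * (K j : ℝ) := by exact_mod_cast (hkj j).2
    rw [div_div, div_le_div_iff₀ (by positivity) (by positivity)]
    have hX : 2 * Real.log 2 * 4 ^ (n + 1) * 10 ^ (n - 1) / c * (η ^ 2)⁻¹ * A₁ *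
        ((r j) ^ (n - 1 : ℕ))⁻¹ * ((K j : ℝ) * q) =
        2 * Real.log 2 * A₁ * (K j : ℝ) := by
      rw [hq, pow_succ, div_pow]
      have h10 : (0:ℝ) < (10:ℝ) ^ (n - 1) := by positivity
      have hRm : (0:ℝ) < (r j) ^ (n - 1) := by positivity
      field_simp
    nlinarith [hX, mul_nonneg (mul_nonneg hA.le hlog2.le) (sub_nonneg.2 hkK)]
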